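/- Let q be a prime. Then Σ e_q(u⁻¹ + v⁻¹ − u'⁻¹ − v'⁻¹) = q² · |Kl(0;q)|⁴ − q · Σ_{r ∈ ZMod q} |Kl(r;q)|⁴, where the sum on the left-hand side runs over all quadruples (u, v, u', v') ∈ ((ZMod q)ˣ)⁴ with u + v − u' − v' ≠ 0. -/

import Mathlib

open scoped BigOperators

/-- The additive character `e_q(x) = e(x̃/q)` on `ZMod q`. -/
noncomputable def eChar (q : ℕ) (x : ZMod q) : ℂ :=
  Complex.exp (2 * (Real.pi : ℂ) * Complex.I * (x.val : ℂ) / (q : ℂ))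

/-- The normalized Kloosterman sum `Kl(x;q) = q^{-1/2} ∑_{d ∈ (ZMod q)ˣ} e_q(x d + d⁻¹)`. -/
noncomputable def Kl (q : ℕ) [NeZero q] (x : ZMod q) : ℂ :=
  ((Real.sqrt q)⁻¹ : ℝ) *
    ∑ d : (ZMod q)ˣ, eChar q (x * (d : ZMod q) + ((d⁻¹ : (ZMod q)ˣ) : ZMod q))

/-- `ℓ¹`-norm of a (finitely supported) sequence of complex numbers. -/
noncomputable def l1norm {ι : Type*} (f : ι → ℂ) : ℝ := ∑' i, ‖f i‖

/-- `ℓ²`-norm of a (finitely supported) sequence of complex numbers. -/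
noncomputable def l2norm {ι : Type*} (f : ι → ℂ) : ℝ := Real.sqrt (∑' i, ‖f i‖ ^ 2)


variable {q : ℕ} [NeZero q]

lemma eChar_eq (x : ZMod q) : eChar q x = ZMod.stdAddChar x := by
  rw [ZMod.stdAddChar_apply, ZMod.toCircle_apply, eChar]

lemma norm_stdAddChar (x : ZMod q) : ‖(ZMod.stdAddChar x : ℂ)‖ = 1 := by
  rw [ZMod.stdAddChar_apply]
  rw [Circle.norm_coe]

lemma conj_stdAddChar (x : ZMod q) :
    (starRingEnd ℂ) (ZMod.stdAddChar x) = ZMod.stdAddChar (-x) := by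
  have h1 : (ZMod.stdAddChar (x) : ℂ) * ZMod.stdAddChar (-x) = 1 := by
    rw [← AddChar.map_add_eq_mul]; simp
  have h2 := Complex.inv_eq_conj (norm_stdAddChar x)
  rw [← h2, eq_comm]
  exact eq_inv_of_mul_eq_one_left (by rw [mul_comm]; exact h1)
section Main
variable (q : ℕ) [Fact (Nat.Prime q)]

lemma sum_char (s : ZMod q) :
    ∑ r : ZMod q, (ZMod.stdAddChar (r * s) : ℂ) = if s = 0 then (q : ℂ) else 0 := by
  rw [AddChar.sum_mulShift s (ZMod.isPrimitive_stdAddChar q), ZMod.card]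
  split_ifs <;> simp

lemma char_term (r : ZMod q) (u v u' v' : (ZMod q)ˣ) :
    (ZMod.stdAddChar (r * ((u : ZMod q) + (v : ZMod q) - (u' : ZMod q) - (v' : ZMod q)) +
        ((u : ZMod q)⁻¹ + (v : ZMod q)⁻¹ - (u' : ZMod q)⁻¹ - (v' : ZMod q)⁻¹)) : ℂ) =
      (ZMod.stdAddChar (r * (u : ZMod q) + (u : ZMod q)⁻¹) * ZMod.stdAddChar (r * (v : ZMod q) + (v : ZMod q)⁻¹)) *
        (ZMod.stdAddChar (-(r * (u' : ZMod q) + (u' : ZMod q)⁻¹)) *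
          ZMod.stdAddChar (-(r * (v' : ZMod q) + (v' : ZMod q)⁻¹))) := by
  rw [show r * ((u : ZMod q) + (v : ZMod q) - (u' : ZMod q) - (v' : ZMod q)) +
        ((u : ZMod q)⁻¹ + (v : ZMod q)⁻¹ - (u' : ZMod q)⁻¹ - (v' : ZMod q)⁻¹) =
      ((r * (u : ZMod q) + (u : ZMod q)⁻¹) + (r * (v : ZMod q) + (v : ZMod q)⁻¹)) +
        (-(r * (u' : ZMod q) + (u' : ZMod q)⁻¹) + -(r * (v' : ZMod q) + (v' : ZMod q)⁻¹)) from by ring]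
  simp only [AddChar.map_add_eq_mul]

lemma key (r : ZMod q) :
    (q : ℂ) ^ 2 * ((‖Kl q r‖ : ℝ) : ℂ) ^ 4 =
      ∑ u : (ZMod q)ˣ, ∑ v : (ZMod q)ˣ, ∑ u' : (ZMod q)ˣ, ∑ v' : (ZMod q)ˣ,
        (ZMod.stdAddChar (r * ((u : ZMod q) + (v : ZMod q) - (u' : ZMod q) - (v' : ZMod q)) +
          ((u : ZMod q)⁻¹ + (v : ZMod q)⁻¹ - (u' : ZMod q)⁻¹ - (v' : ZMod q)⁻¹)) : ℂ) := by
  have hq : (0 : ℝ) < q := by exact_mod_cast (Fact.out : q.Prime).pos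
  set f : (ZMod q)ˣ → ℂ := fun d => ZMod.stdAddChar (r * (d : ZMod q) + (d : ZMod q)⁻¹) with hf
  set g : (ZMod q)ˣ → ℂ := fun d => ZMod.stdAddChar (-(r * (d : ZMod q) + (d : ZMod q)⁻¹)) with hg
  set S : ℂ := ∑ d : (ZMod q)ˣ, f d with hSdef
  have hS : Kl q r = ((Real.sqrt q)⁻¹ : ℝ) * S := by
    rw [Kl, hSdef]
    congr 1
    refine Finset.sum_congr rfl fun d _ => ?_
    rw [hf, eChar_eq, ← ZMod.inv_coe_unit]
  have hsq : Real.sqrt q ^ 2 = (q : ℝ) := Real.sq_sqrt hq.le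
  have hsne : Real.sqrt q ≠ 0 := ne_of_gt (Real.sqrt_pos.2 hq)
  have h4 : ((Real.sqrt q)⁻¹) ^ 4 * (q : ℝ) ^ 2 = 1 := by
    rw [show ((Real.sqrt q)⁻¹) ^ 4 = ((Real.sqrt q ^ 2)⁻¹) ^ 2 from by ring, hsq]
    field_simp
  have h2 : ‖Kl q r‖ = (Real.sqrt q)⁻¹ * ‖S‖ := by
    rw [hS, norm_mul, Complex.norm_real, Real.norm_eq_abs,
      abs_of_nonneg (inv_nonneg.2 (Real.sqrt_nonneg _))]
  have hreal : ‖Kl q r‖ ^ 4 * (q : ℝ) ^ 2 = ‖S‖ ^ 4 := by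
    rw [h2]; linear_combination (‖S‖ ^ 4) * h4
  have hmc : S * (starRingEnd ℂ) S = ((‖S‖ : ℝ) : ℂ) ^ 2 := by
    rw [Complex.mul_conj, Complex.normSq_eq_norm_sq]
    push_cast; ring
  have hcs : (starRingEnd ℂ) S = ∑ d : (ZMod q)ˣ, g d := by
    rw [hSdef, map_sum]
    exact Finset.sum_congr rfl fun d _ => conj_stdAddChar _
  calc (q : ℂ) ^ 2 * ((‖Kl q r‖ : ℝ) : ℂ) ^ 4
      = ((‖Kl q r‖ ^ 4 * (q : ℝ) ^ 2 : ℝ) : ℂ) := by push_cast; ring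
    _ = ((‖S‖ : ℝ) : ℂ) ^ 4 := by rw [hreal]; push_cast; ring
    _ = (S * (starRingEnd ℂ) S) * (S * (starRingEnd ℂ) S) := by rw [hmc]; ring
    _ = (S * S) * ((starRingEnd ℂ) S * (starRingEnd ℂ) S) := by ring
    _ = ((∑ d : (ZMod q)ˣ, f d) * ∑ d : (ZMod q)ˣ, f d) *
          ((∑ d : (ZMod q)ˣ, g d) * ∑ d : (ZMod q)ˣ, g d) := by rw [hcs, hSdef]
    _ = ∑ u : (ZMod q)ˣ, ∑ v : (ZMod q)ˣ, ∑ u' : (ZMod q)ˣ, ∑ v' : (ZMod q)ˣ,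
          (f u * f v) * (g u' * g v') := by
        rw [Finset.sum_mul_sum, Finset.sum_mul_sum]
        rw [Finset.sum_mul]
        refine Finset.sum_congr rfl fun u _ => ?_
        rw [Finset.sum_mul]
        refine Finset.sum_congr rfl fun v _ => ?_
        rw [Finset.mul_sum]
        refine Finset.sum_congr rfl fun u' _ => ?_
        rw [Finset.mul_sum]
    _ = _ := by
        refine Finset.sum_congr rfl fun u _ => Finset.sum_congr rfl fun v _ =>
          Finset.sum_congr rfl fun u' _ => Finset.sum_congr rfl fun v' _ => ?_
        rw [char_term]

lemma point (u v u' v' : (ZMod q)ˣ) :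
    (if (u : ZMod q) + (v : ZMod q) - (u' : ZMod q) - (v' : ZMod q) ≠ 0 then
        eChar q ((u : ZMod q)⁻¹ + (v : ZMod q)⁻¹ - (u' : ZMod q)⁻¹ - (v' : ZMod q)⁻¹)
      else 0) =
    (ZMod.stdAddChar ((0 : ZMod q) * ((u : ZMod q) + (v : ZMod q) - (u' : ZMod q) - (v' : ZMod q)) +
        ((u : ZMod q)⁻¹ + (v : ZMod q)⁻¹ - (u' : ZMod q)⁻¹ - (v' : ZMod q)⁻¹)) : ℂ) -
      (q : ℂ)⁻¹ * ∑ r : ZMod q, (ZMod.stdAddChar (r * ((u : ZMod q) + (v : ZMod q) - (u' : ZMod q) - (v' : ZMod q)) +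
        ((u : ZMod q)⁻¹ + (v : ZMod q)⁻¹ - (u' : ZMod q)⁻¹ - (v' : ZMod q)⁻¹)) : ℂ) := by
  have hq : (q : ℂ) ≠ 0 := by
    exact_mod_cast Nat.cast_ne_zero.2 (Fact.out : q.Prime).ne_zero
  set s : ZMod q := (u : ZMod q) + (v : ZMod q) - (u' : ZMod q) - (v' : ZMod q) with hs
  set t : ZMod q := (u : ZMod q)⁻¹ + (v : ZMod q)⁻¹ - (u' : ZMod q)⁻¹ - (v' : ZMod q)⁻¹ with ht
  have hsum : ∑ r : ZMod q, (ZMod.stdAddChar (r * s + t) : ℂ) =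
      (if s = 0 then (q : ℂ) else 0) * ZMod.stdAddChar t := by
    rw [← sum_char q s, Finset.sum_mul]
    exact Finset.sum_congr rfl fun r _ => AddChar.map_add_eq_mul _ _ _
  rw [eChar_eq, hsum, zero_mul, zero_add]
  by_cases h0 : s = 0
  · rw [if_neg (not_not.2 h0), if_pos h0, inv_mul_cancel_left₀ hq, sub_self]
  · rw [if_pos h0, if_neg h0, zero_mul, mul_zero, sub_zero]

theorem sigma_one_identity' :
    (∑ u : (ZMod q)ˣ, ∑ v : (ZMod q)ˣ, ∑ u' : (ZMod q)ˣ, ∑ v' : (ZMod q)ˣ,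
        if (u : ZMod q) + (v : ZMod q) - (u' : ZMod q) - (v' : ZMod q) ≠ 0 then
          eChar q ((u : ZMod q)⁻¹ + (v : ZMod q)⁻¹ - (u' : ZMod q)⁻¹ - (v' : ZMod q)⁻¹)
        else 0) =
      (q : ℂ) ^ 2 * ((‖Kl q 0‖ : ℝ) : ℂ) ^ 4 -
        (q : ℂ) * ∑ r : ZMod q, ((‖Kl q r‖ : ℝ) : ℂ) ^ 4 := by
  have hq : (q : ℂ) ≠ 0 := by
    exact_mod_cast Nat.cast_ne_zero.2 (Fact.out : q.Prime).ne_zero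
  set F : ZMod q → (ZMod q)ˣ → (ZMod q)ˣ → (ZMod q)ˣ → (ZMod q)ˣ → ℂ :=
    fun r u v u' v' => (ZMod.stdAddChar (r * ((u : ZMod q) + (v : ZMod q) - (u' : ZMod q) - (v' : ZMod q)) +
      ((u : ZMod q)⁻¹ + (v : ZMod q)⁻¹ - (u' : ZMod q)⁻¹ - (v' : ZMod q)⁻¹)) : ℂ) with hF
  have swap : (∑ r : ZMod q, ∑ u : (ZMod q)ˣ, ∑ v : (ZMod q)ˣ, ∑ u' : (ZMod q)ˣ,
        ∑ v' : (ZMod q)ˣ, F r u v u' v')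
      = ∑ u : (ZMod q)ˣ, ∑ v : (ZMod q)ˣ, ∑ u' : (ZMod q)ˣ, ∑ v' : (ZMod q)ˣ,
        ∑ r : ZMod q, F r u v u' v' := by
    rw [Finset.sum_comm]
    refine Finset.sum_congr rfl fun u _ => ?_
    rw [Finset.sum_comm]
    refine Finset.sum_congr rfl fun v _ => ?_
    rw [Finset.sum_comm]
    refine Finset.sum_congr rfl fun u' _ => ?_
    rw [Finset.sum_comm]
  calc (∑ u : (ZMod q)ˣ, ∑ v : (ZMod q)ˣ, ∑ u' : (ZMod q)ˣ, ∑ v' : (ZMod q)ˣ,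
        if (u : ZMod q) + (v : ZMod q) - (u' : ZMod q) - (v' : ZMod q) ≠ 0 then
          eChar q ((u : ZMod q)⁻¹ + (v : ZMod q)⁻¹ - (u' : ZMod q)⁻¹ - (v' : ZMod q)⁻¹)
        else 0)
      = ∑ u : (ZMod q)ˣ, ∑ v : (ZMod q)ˣ, ∑ u' : (ZMod q)ˣ, ∑ v' : (ZMod q)ˣ,
          (F 0 u v u' v' - (q : ℂ)⁻¹ * ∑ r : ZMod q, F r u v u' v') := by
        refine Finset.sum_congr rfl fun u _ => Finset.sum_congr rfl fun v _ =>
          Finset.sum_congr rfl fun u' _ => Finset.sum_congr rfl fun v' _ => ?_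
        exact point q u v u' v'
    _ = (∑ u : (ZMod q)ˣ, ∑ v : (ZMod q)ˣ, ∑ u' : (ZMod q)ˣ, ∑ v' : (ZMod q)ˣ,
          F 0 u v u' v') -
        (q : ℂ)⁻¹ * ∑ u : (ZMod q)ˣ, ∑ v : (ZMod q)ˣ, ∑ u' : (ZMod q)ˣ, ∑ v' : (ZMod q)ˣ,
          ∑ r : ZMod q, F r u v u' v' := by
        simp only [Finset.sum_sub_distrib, Finset.mul_sum]
    _ = (q : ℂ) ^ 2 * ((‖Kl q 0‖ : ℝ) : ℂ) ^ 4 -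
        (q : ℂ)⁻¹ * ∑ r : ZMod q, (q : ℂ) ^ 2 * ((‖Kl q r‖ : ℝ) : ℂ) ^ 4 := by
        rw [← swap, ← key q 0]
        congr 1
        congr 1
        exact Finset.sum_congr rfl fun r _ => (key q r).symm
    _ = (q : ℂ) ^ 2 * ((‖Kl q 0‖ : ℝ) : ℂ) ^ 4 -
        (q : ℂ) * ∑ r : ZMod q, ((‖Kl q r‖ : ℝ) : ℂ) ^ 4 := by
        rw [Finset.mul_sum, Finset.mul_sum]
        congr 1
        refine Finset.sum_congr rfl fun r _ => ?_
        field_simp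

end Main


/-- The evaluation of `Σ₁`, the contribution of the quadruples `(u,v,u',v')` of units with
`u + v - u' - v' ≠ 0`, in terms of fourth moments of Kloosterman sums. -/
theorem sigma_one_identity (q : ℕ) [Fact (Nat.Prime q)] :
    (∑ u : (ZMod q)ˣ, ∑ v : (ZMod q)ˣ, ∑ u' : (ZMod q)ˣ, ∑ v' : (ZMod q)ˣ,
        if (u : ZMod q) + (v : ZMod q) - (u' : ZMod q) - (v' : ZMod q) ≠ 0 then
          eChar q ((u : ZMod q)⁻¹ + (v : ZMod q)⁻¹ - (u' : ZMod q)⁻¹ - (v' : ZMod q)⁻¹)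
        else 0) =
      (q : ℂ) ^ 2 * ((‖Kl q 0‖ : ℝ) : ℂ) ^ 4 -
        (q : ℂ) * ∑ r : ZMod q, ((‖Kl q r‖ : ℝ) : ℂ) ^ 4 := by
  exact sigma_one_identity' q
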